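/- arXiv:1303.4432 — 3 statements merged into one kernel-verified Lean document; each statement's English description precedes it below -/
import Mathlib

section
/- (Klüppelberg) If a distribution function G on ℝ belongs to the class S*, then G is subexponential. -/
open MeasureTheory ProbabilityTheory Filter Set
open scoped ENNReal ENat

noncomputable section

/-- The tail (right-tail) distribution function `F̄(x) = μ((x,∞))` of a law `μ` on `ℝ`. -/
def rtail (μ : Measure ℝ) (x : ℝ) : ℝ := (μ (Set.Ioi x)).toReal

/-- `μ` (with distribution function `F`) is long-tailed (LT): `F̄(x) > 0` for all `x` and
`F̄(x-h)/F̄(x) → 1` as `x → ∞` for every fixed `h > 0`. -/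
def LongTailed (μ : Measure ℝ) : Prop :=
  (∀ x : ℝ, 0 < μ (Set.Ioi x)) ∧
    ∀ h : ℝ, 0 < h →
      Filter.Tendsto (fun x : ℝ => rtail μ (x - h) / rtail μ x) Filter.atTop (nhds 1)

/-- The distribution `μ` (with distribution function `G`) belongs to the class `S*`:
`Ḡ(x) > 0` for all `x` and `∫_0^x Ḡ(x-y) Ḡ(y) dy ∼ 2 m_{G⁺} Ḡ(x)` as `x → ∞`,
where `m_{G⁺} = ∫_0^∞ Ḡ(t) dt`. -/
def MemSstar (μ : Measure ℝ) : Prop :=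
  (∀ x : ℝ, 0 < μ (Set.Ioi x)) ∧
    Filter.Tendsto
      (fun x : ℝ => (∫ y in (0:ℝ)..x, rtail μ (x - y) * rtail μ y) /
        (2 * (∫ y in Set.Ioi (0:ℝ), rtail μ y) * rtail μ x))
      Filter.atTop (nhds 1)

/-- The partial sums `S_n` of the random walk: `walk ξ n = ξ 0 + ⋯ + ξ (n-1)`,
where `ξ i` denotes the increment `ξ_{i+1}` of the paper (so `S_0 = 0`). -/
def walk {Ω : Type*} (ξ : ℕ → Ω → ℝ) (n : ℕ) (ω : Ω) : ℝ := ∑ i ∈ Finset.range n, ξ i ω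

/-- The convolution of two laws on `ℝ`: the law of the sum of independent copies. -/
def mconv (μ ν : Measure ℝ) : Measure ℝ := (μ.prod ν).map (fun p => p.1 + p.2)

/-- The law of `max(φ, 0)` for `φ ∼ ν`; its distribution function is `G⁺ = G·1_{ℝ₊}`. -/
def plusPart (ν : Measure ℝ) : Measure ℝ := ν.map (fun t => max t 0)

/-- A distribution (function `G`) on `ℝ₊` is subexponential: `Ḡ(x) > 0` for all `x` and
`(1 - G*G)(x)/Ḡ(x) → 2` as `x → ∞`. -/
def SubexpPos (ν : Measure ℝ) : Prop :=
  (∀ x : ℝ, 0 < ν (Set.Ioi x)) ∧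
    Filter.Tendsto (fun x : ℝ => ((mconv ν ν) (Set.Ioi x)).toReal / rtail ν x)
      Filter.atTop (nhds 2)

/-- A distribution `G` on `ℝ` is subexponential iff `G⁺` is subexponential. -/
def Subexponential (ν : Measure ℝ) : Prop := SubexpPos (plusPart ν)


set_option linter.unusedSectionVars false
set_option linter.unusedVariables false
set_option linter.unreachableTactic false
set_option linter.unusedTactic false
set_option linter.unnecessarySeqFocus false
set_option maxHeartbeats 1000000

section Aux
variable (ν : Measure ℝ) [IsProbabilityMeasure ν]

lemma rtail_nonneg (x : ℝ) : 0 ≤ rtail ν x := ENNReal.toReal_nonneg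

lemma rtail_anti : Antitone (rtail ν) := by
  intro a b hab
  exact ENNReal.toReal_mono (measure_ne_top ν _) (measure_mono (Ioi_subset_Ioi hab))

lemma rtail_le_one (x : ℝ) : rtail ν x ≤ 1 := by
  have : ν (Set.Ioi x) ≤ 1 := prob_le_one
  simpa [rtail] using ENNReal.toReal_mono ENNReal.one_ne_top this

lemma rtail_meas : Measurable (rtail ν) := (rtail_anti ν).measurable

lemma ofReal_rtail (x : ℝ) : ENNReal.ofReal (rtail ν x) = ν (Set.Ioi x) :=
  ENNReal.ofReal_toReal (measure_ne_top ν _)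

lemma rtail_pos (h : ∀ x : ℝ, 0 < ν (Set.Ioi x)) (x : ℝ) : 0 < rtail ν x :=
  ENNReal.toReal_pos (h x).ne' (measure_ne_top ν _)

lemma g_intervalIntegrable (x a b : ℝ) :
    IntervalIntegrable (fun y => rtail ν (x - y) * rtail ν y) volume a b := by
  rw [intervalIntegrable_iff]
  apply Measure.integrableOn_of_bounded (M := 1) measure_Ioc_lt_top.ne
  · exact (((rtail_meas ν).comp (measurable_const.sub measurable_id)).mul
      (rtail_meas ν)).aestronglyMeasurable
  · filter_upwards with y
    rw [Real.norm_eq_abs, abs_of_nonneg (mul_nonneg (rtail_nonneg ν _) (rtail_nonneg ν _))]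
    exact mul_le_one₀ (rtail_le_one ν _) (rtail_nonneg ν _) (rtail_le_one ν _)

/-- reflection identity -/
lemma g_reflect (x a : ℝ) :
    (∫ y in (x - a)..x, rtail ν (x - y) * rtail ν y)
      = ∫ y in (0:ℝ)..a, rtail ν (x - y) * rtail ν y := by
  have := intervalIntegral.integral_comp_sub_left
    (a := (0:ℝ)) (b := a) (fun y => rtail ν (x - y) * rtail ν y) x
  rw [sub_zero] at this
  rw [← this]
  apply intervalIntegral.integral_congr
  intro y _
  simp only [sub_sub_cancel]
  ring

lemma sstar_aux (h : MemSstar ν) :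
    IntegrableOn (rtail ν) (Set.Ioi (0:ℝ)) volume ∧ 0 < ∫ y in Set.Ioi (0:ℝ), rtail ν y := by
  by_cases hm : (∫ y in Set.Ioi (0:ℝ), rtail ν y) = 0
  · exfalso
    have h2 := h.2
    have : Filter.Tendsto (fun _ : ℝ => (0:ℝ)) Filter.atTop (nhds 1) := by
      refine h2.congr (fun x => ?_)
      rw [hm]
      simp
    have := tendsto_nhds_unique this tendsto_const_nhds
    norm_num at this
  · have hint : IntegrableOn (rtail ν) (Set.Ioi (0:ℝ)) volume := by
      by_contra hni
      exact hm (integral_undef hni)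
    refine ⟨hint, lt_of_le_of_ne (setIntegral_nonneg measurableSet_Ioi
      (fun y _ => rtail_nonneg ν y)) (Ne.symm hm)⟩

lemma rtail_tendsto_zero (hint : IntegrableOn (rtail ν) (Set.Ioi (0:ℝ)) volume) :
    Filter.Tendsto (rtail ν) Filter.atTop (nhds 0) := by
  have hlim : Filter.Tendsto (rtail ν) Filter.atTop (nhds (⨅ x, rtail ν x)) :=
    tendsto_atTop_ciInf (rtail_anti ν) ⟨0, by rintro y ⟨x, rfl⟩; exact rtail_nonneg ν x⟩
  have hinf0 : (⨅ x, rtail ν x) = 0 := by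
    set c := ⨅ x, rtail ν x with hc
    have hcn : 0 ≤ c := le_ciInf fun x => rtail_nonneg ν x
    rcases eq_or_lt_of_le hcn with h0 | hcp
    · exact h0.symm
    · exfalso
      -- r ≥ c on ℝ, so ∫_{Ioc 0 n} r ≥ n * c for all n, contradiction
      have hle : ∀ x, c ≤ rtail ν x := fun x =>
        ciInf_le ⟨0, by rintro y ⟨x, rfl⟩; exact rtail_nonneg ν x⟩ x
      set M := ∫ y in Set.Ioi (0:ℝ), rtail ν y with hM
      obtain ⟨n, hn⟩ := exists_nat_gt (M / c)
      have h1 : (n:ℝ) * c ≤ ∫ y in Set.Ioc (0:ℝ) n, rtail ν y := by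
        have : (n:ℝ) * c = ∫ _ in Set.Ioc (0:ℝ) (n:ℝ), c := by
          rw [setIntegral_const]
          simp [Real.volume_Ioc, ENNReal.toReal_ofReal (Nat.cast_nonneg n), mul_comm]
        rw [this]
        apply setIntegral_mono_on (integrableOn_const measure_Ioc_lt_top.ne)
          (hint.mono_set Ioc_subset_Ioi_self) measurableSet_Ioc
        exact fun y _ => hle y
      have h2 : (∫ y in Set.Ioc (0:ℝ) n, rtail ν y) ≤ M := by
        apply setIntegral_mono_set hint
        · filter_upwards with y using rtail_nonneg ν y
        · exact HasSubset.Subset.eventuallyLE Ioc_subset_Ioi_self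
      have : (n:ℝ) * c ≤ M := h1.trans h2
      rw [div_lt_iff₀ hcp] at hn
      linarith
  rwa [hinf0] at hlim

lemma Mh_pos (hpos : ∀ x : ℝ, 0 < ν (Set.Ioi x))
    (hint : IntegrableOn (rtail ν) (Set.Ioi (0:ℝ)) volume) (a : ℝ) (ha : 0 < a) :
    0 < ∫ y in Set.Ioi a, rtail ν y := by
  have h1 : rtail ν (a+1) ≤ ∫ y in Set.Ioc a (a+1), rtail ν y := by
    have : rtail ν (a+1) = ∫ _ in Set.Ioc a (a+1), rtail ν (a+1) := by
      rw [setIntegral_const]; simp [Real.volume_Ioc]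
    rw [this]
    apply setIntegral_mono_on (integrableOn_const measure_Ioc_lt_top.ne)
      ((hint.mono_set (Ioi_subset_Ioi ha.le)).mono_set Ioc_subset_Ioi_self) measurableSet_Ioc
    exact fun y hy => rtail_anti ν hy.2
  have h2 : (∫ y in Set.Ioc a (a+1), rtail ν y) ≤ ∫ y in Set.Ioi a, rtail ν y := by
    apply setIntegral_mono_set (hint.mono_set (Ioi_subset_Ioi ha.le))
    · filter_upwards with y using rtail_nonneg ν y
    · exact HasSubset.Subset.eventuallyLE Ioc_subset_Ioi_self
  exact lt_of_lt_of_le (lt_of_lt_of_le (ENNReal.toReal_pos (hpos (a+1)).ne'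
    (measure_ne_top ν _)) h1) h2

lemma phi_half (x : ℝ) :
    (∫ y in (0:ℝ)..x, rtail ν (x - y) * rtail ν y)
      = 2 * ∫ y in (0:ℝ)..(x/2), rtail ν (x - y) * rtail ν y := by
  have hsplit := intervalIntegral.integral_add_adjacent_intervals
    (g_intervalIntegrable ν x 0 (x/2)) (g_intervalIntegrable ν x (x/2) x)
  have hrefl : (∫ y in (x/2)..x, rtail ν (x - y) * rtail ν y)
      = ∫ y in (0:ℝ)..(x/2), rtail ν (x - y) * rtail ν y := by
    have := g_reflect ν x (x/2)
    rw [show x - x/2 = x/2 by ring] at this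
    exact this
  rw [← hsplit, hrefl]; ring

lemma psi_tendsto (h2 : Filter.Tendsto
      (fun x : ℝ => (∫ y in (0:ℝ)..x, rtail ν (x - y) * rtail ν y) /
        (2 * (∫ y in Set.Ioi (0:ℝ), rtail ν y) * rtail ν x))
      Filter.atTop (nhds 1))
    (hpos : ∀ x : ℝ, 0 < ν (Set.Ioi x)) (hm : 0 < ∫ y in Set.Ioi (0:ℝ), rtail ν y) :
    Filter.Tendsto (fun x : ℝ => (∫ y in (0:ℝ)..x, rtail ν (x - y) * rtail ν y) /
      (2 * rtail ν x)) Filter.atTop (nhds (∫ y in Set.Ioi (0:ℝ), rtail ν y)) := by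
  set m := ∫ y in Set.Ioi (0:ℝ), rtail ν y
  have := h2.mul_const m
  rw [one_mul] at this
  refine this.congr (fun x => ?_)
  have hr : rtail ν x ≠ 0 := (rtail_pos ν hpos x).ne'
  field_simp

lemma longtailed (h2 : Filter.Tendsto
      (fun x : ℝ => (∫ y in (0:ℝ)..x, rtail ν (x - y) * rtail ν y) /
        (2 * (∫ y in Set.Ioi (0:ℝ), rtail ν y) * rtail ν x))
      Filter.atTop (nhds 1))
    (hpos : ∀ x : ℝ, 0 < ν (Set.Ioi x))
    (hint : IntegrableOn (rtail ν) (Set.Ioi (0:ℝ)) volume)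
    (hm : 0 < ∫ y in Set.Ioi (0:ℝ), rtail ν y) :
    ∀ h : ℝ, 0 < h →
      Filter.Tendsto (fun x : ℝ => rtail ν (x - h) / rtail ν x) Filter.atTop (nhds 1) := by
  intro h hh
  set r := rtail ν with hr
  set m := ∫ y in Set.Ioi (0:ℝ), rtail ν y with hmdef
  set mh := ∫ y in (0:ℝ)..h, r y with hmh
  set Mh := ∫ y in Set.Ioi h, r y with hMh
  have hMhpos : 0 < Mh := Mh_pos ν hpos hint h hh
  have hphi := psi_tendsto ν h2 hpos hm
  -- m = mh + Mh
  have hsum : m = mh + Mh := by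
    have hdisj : Disjoint (Set.Ioc (0:ℝ) h) (Set.Ioi h) := Ioc_disjoint_Ioi le_rfl
    have hunion : Set.Ioc (0:ℝ) h ∪ Set.Ioi h = Set.Ioi (0:ℝ) := Ioc_union_Ioi_eq_Ioi hh.le
    have := setIntegral_union hdisj measurableSet_Ioi
      (hint.mono_set (hunion ▸ subset_union_left)) (hint.mono_set (Ioi_subset_Ioi hh.le))
    rw [hunion] at this
    rw [hmdef, this, hmh, intervalIntegral.integral_of_le hh.le]
  -- J x := ∫_h^{x/2} r tends to Mh
  have hJ : Filter.Tendsto (fun x : ℝ => ∫ y in h..(x/2), r y) Filter.atTop (nhds Mh) :=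
    intervalIntegral_tendsto_integral_Ioi h (hint.mono_set (Ioi_subset_Ioi hh.le))
      (tendsto_id.atTop_div_const two_pos)
  -- upper bound function tends to 1
  have hU : Filter.Tendsto
      (fun x : ℝ => ((∫ y in (0:ℝ)..x, r (x - y) * r y) / (2 * r x) - mh) /
        (∫ y in h..(x/2), r y)) Filter.atTop (nhds 1) := by
    have := (hphi.sub_const mh).div hJ hMhpos.ne'
    rw [← hmdef, hsum, add_sub_cancel_left, div_self hMhpos.ne'] at this
    exact this
  -- squeeze
  apply tendsto_of_tendsto_of_tendsto_of_le_of_le' tendsto_const_nhds hU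
  · filter_upwards with x
    exact (one_le_div (rtail_pos ν hpos x)).2 (rtail_anti ν (by linarith))
  · filter_upwards [Filter.eventually_ge_atTop (2*(h+1))] with x hx
    have hrx : 0 < r x := rtail_pos ν hpos x
    have hJpos : 0 < ∫ y in h..(x/2), r y := by
      have h1 : r (h+1) ≤ ∫ y in h..(h+1), r y := by
        have : r (h+1) = ∫ _ in h..(h+1), r (h+1) := by
          rw [intervalIntegral.integral_const]; simp
        rw [this]
        apply intervalIntegral.integral_mono_on (by linarith)
          (intervalIntegrable_const) ((rtail_anti ν).intervalIntegrable)
        exact fun y hy => rtail_anti ν hy.2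
      have h2 : (∫ y in h..(h+1), r y) + 0 ≤ ∫ y in h..(x/2), r y := by
        rw [← intervalIntegral.integral_add_adjacent_intervals
          ((rtail_anti ν).intervalIntegrable (a := h) (b := h+1))
          ((rtail_anti ν).intervalIntegrable (a := h+1) (b := x/2))]
        gcongr
        apply intervalIntegral.integral_nonneg (by linarith)
        exact fun y _ => rtail_nonneg ν y
      have h3 : 0 < r (h+1) := rtail_pos ν hpos (h+1)
      linarith
    -- key inequality: φ x ≥ 2 (r x * mh + r (x-h) * J x)
    have hkey : 2 * (r x * mh + r (x - h) * (∫ y in h..(x/2), r y))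
        ≤ ∫ y in (0:ℝ)..x, r (x - y) * r y := by
      rw [phi_half]
      have hsplit := intervalIntegral.integral_add_adjacent_intervals
        (g_intervalIntegrable ν x 0 h) (g_intervalIntegrable ν x h (x/2))
      rw [← hsplit]
      have hA : r x * mh ≤ ∫ y in (0:ℝ)..h, r (x - y) * r y := by
        rw [hmh, ← intervalIntegral.integral_const_mul]
        apply intervalIntegral.integral_mono_on hh.le
          (((rtail_anti ν).intervalIntegrable).const_mul _) (g_intervalIntegrable ν x 0 h)
        intro y hy
        exact mul_le_mul_of_nonneg_right (rtail_anti ν (by linarith [hy.1])) (rtail_nonneg ν y)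
      have hB : r (x - h) * (∫ y in h..(x/2), r y) ≤ ∫ y in h..(x/2), r (x - y) * r y := by
        rw [← intervalIntegral.integral_const_mul]
        apply intervalIntegral.integral_mono_on (by linarith)
          (((rtail_anti ν).intervalIntegrable).const_mul _) (g_intervalIntegrable ν x h (x/2))
        intro y hy
        exact mul_le_mul_of_nonneg_right (rtail_anti ν (by linarith [hy.1])) (rtail_nonneg ν y)
      linarith
    rw [div_le_div_iff₀ hrx hJpos]
    have heq : ((∫ y in (0:ℝ)..x, r (x - y) * r y) / (2 * r x)) * r x
        = (∫ y in (0:ℝ)..x, r (x - y) * r y) / 2 := by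
      field_simp
    have expand : ((∫ y in (0:ℝ)..x, r (x - y) * r y) / (2 * r x) - mh) * r x
        = (∫ y in (0:ℝ)..x, r (x - y) * r y) / 2 - mh * r x := by
      rw [sub_mul, heq]
    rw [expand]
    linarith

lemma max_meas : Measurable (fun t : ℝ => max t 0) := measurable_id.max measurable_const

lemma plusPart_Ioi (x : ℝ) (hx : 0 ≤ x) : plusPart ν (Set.Ioi x) = ν (Set.Ioi x) := by
  rw [plusPart, Measure.map_apply max_meas measurableSet_Ioi]
  congr 1
  ext t
  simp only [mem_preimage, mem_Ioi]
  constructor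
  · intro ht
    rcases le_or_gt t 0 with h' | h'
    · simp [max_eq_right h'] at ht; linarith
    · rwa [max_eq_left h'.le] at ht
  · intro ht
    have h0 : 0 < t := lt_of_le_of_lt hx ht
    rwa [max_eq_left h0.le]

lemma plusPart_Ioi_neg (x : ℝ) (hx : x < 0) : plusPart ν (Set.Ioi x) = 1 := by
  rw [plusPart, Measure.map_apply max_meas measurableSet_Ioi]
  have : (fun t : ℝ => max t 0) ⁻¹' Set.Ioi x = Set.univ := by
    ext t; simp only [mem_preimage, mem_Ioi, mem_univ, iff_true]
    exact lt_of_lt_of_le hx (le_max_right t 0)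
  rw [this, measure_univ]

lemma plusPart_Ici_zero : plusPart ν (Set.Ici 0) = 1 := by
  rw [plusPart, Measure.map_apply max_meas measurableSet_Ici]
  have : (fun t : ℝ => max t 0) ⁻¹' Set.Ici 0 = Set.univ := by
    ext t; simp [le_max_right]
  rw [this, measure_univ]

instance : IsProbabilityMeasure (plusPart ν) :=
  Measure.isProbabilityMeasure_map (max_meas).aemeasurable

lemma rtail_plusPart (x : ℝ) (hx : 0 ≤ x) : rtail (plusPart ν) x = rtail ν x := by
  rw [rtail, rtail, plusPart_Ioi ν x hx]

lemma mconv_Ioi (x : ℝ) :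
    (mconv (plusPart ν) (plusPart ν)) (Set.Ioi x)
      = ((plusPart ν).prod (plusPart ν)) {p : ℝ × ℝ | x < p.1 + p.2} := by
  rw [mconv, Measure.map_apply (f := fun p : ℝ × ℝ => p.1 + p.2) (measurable_fst.add measurable_snd) measurableSet_Ioi]
  rfl

lemma conv_lower (x : ℝ) (hx : 0 ≤ x) :
    2 * rtail ν x - rtail ν x * rtail ν x
      ≤ ((mconv (plusPart ν) (plusPart ν)) (Set.Ioi x)).toReal := by
  set μ2 := (plusPart ν).prod (plusPart ν) with hμ2
  have hprob : IsProbabilityMeasure μ2 := by infer_instance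
  set T := ν (Set.Ioi x) with hT
  set A : Set (ℝ × ℝ) := Set.Ioi x ×ˢ Set.Ici (0:ℝ) with hA
  set B : Set (ℝ × ℝ) := Set.Ici (0:ℝ) ×ˢ Set.Ioi x with hB
  have hAB : A ∪ B ⊆ {p : ℝ × ℝ | x < p.1 + p.2} := by
    rintro ⟨u, v⟩ (⟨hu, hv⟩ | ⟨hu, hv⟩) <;>
      · simp only [mem_Ioi, mem_Ici] at hu hv
        show x < u + v
        linarith
  have hμA : μ2 A = T := by
    rw [hA, hμ2, Measure.prod_prod, plusPart_Ioi ν x hx, plusPart_Ici_zero, mul_one]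
  have hμB : μ2 B = T := by
    rw [hB, hμ2, Measure.prod_prod, plusPart_Ioi ν x hx, plusPart_Ici_zero, one_mul]
  have hμAB : μ2 (A ∩ B) = T * T := by
    have e1 : Set.Ioi x ∩ Set.Ici (0:ℝ) = Set.Ioi x :=
      inter_eq_self_of_subset_left (fun t ht => hx.trans (le_of_lt ht))
    have e2 : Set.Ici (0:ℝ) ∩ Set.Ioi x = Set.Ioi x :=
      inter_eq_self_of_subset_right (fun t ht => hx.trans (le_of_lt ht))
    have : A ∩ B = Set.Ioi x ×ˢ Set.Ioi x := by
      rw [hA, hB, Set.prod_inter_prod, e1, e2]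
    rw [this, hμ2, Measure.prod_prod, plusPart_Ioi ν x hx]
  have hunion : μ2 (A ∪ B) + μ2 (A ∩ B) = μ2 A + μ2 B :=
    measure_union_add_inter A (hB ▸ measurableSet_Ici.prod measurableSet_Ioi)
  have hmono : μ2 (A ∪ B) ≤ μ2 {p : ℝ × ℝ | x < p.1 + p.2} := measure_mono hAB
  have hineq : T + T ≤ μ2 {p : ℝ × ℝ | x < p.1 + p.2} + T * T := by
    calc T + T = μ2 A + μ2 B := by rw [hμA, hμB]
    _ = μ2 (A ∪ B) + μ2 (A ∩ B) := hunion.symm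
    _ ≤ _ := by rw [hμAB]; exact add_le_add_left hmono _
  rw [mconv_Ioi]
  have hfin : μ2 {p : ℝ × ℝ | x < p.1 + p.2} ≠ ∞ := measure_ne_top _ _
  have hTfin : T ≠ ∞ := measure_ne_top _ _
  have := ENNReal.toReal_mono (by finiteness) hineq
  rw [ENNReal.toReal_add hTfin hTfin, ENNReal.toReal_add hfin (by finiteness),
    ENNReal.toReal_mul] at this
  have hrT : T.toReal = rtail ν x := rfl
  rw [hrT] at this
  linarith

lemma conv_upper (h x : ℝ) (hh : 0 < h) (hx : 4 * h ≤ x) :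
    ((mconv (plusPart ν) (plusPart ν)) (Set.Ioi x)).toReal
      ≤ 2 * rtail ν (x - 2*h)
        + (∫ y in h..(x - 2*h), rtail ν (x - h - y) * rtail ν y) / h := by
  set z := x - h with hz
  set μ2 := (plusPart ν).prod (plusPart ν) with hμ2
  have hμ2prob : IsProbabilityMeasure μ2 := by infer_instance
  set s : Set ℝ := Set.Ioc h (z - h) with hs
  set Bset : Set (ℝ × ℝ) := {p | 2*h ≤ p.1 ∧ 2*h ≤ p.2 ∧ x < p.1 + p.2} with hBset
  have hBmeas : MeasurableSet Bset := by
    apply MeasurableSet.inter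
    · exact measurable_fst measurableSet_Ici
    apply MeasurableSet.inter
    · exact measurable_snd measurableSet_Ici
    · exact measurableSet_lt measurable_const (measurable_fst.add measurable_snd)
  -- the double set
  set W : Set (ℝ × (ℝ × ℝ)) := {q | z - q.1 < q.2.1 ∧ q.1 < q.2.2} with hW
  have hWmeas : MeasurableSet W := by
    apply MeasurableSet.inter
    · exact measurableSet_lt (measurable_const.sub measurable_fst)
        (measurable_fst.comp measurable_snd)
    · exact measurableSet_lt measurable_fst (measurable_snd.comp measurable_snd)
  have hz3 : 3 * h ≤ z := by rw [hz]; linarith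
  set K := ((volume.restrict s).prod μ2) W with hK
  -- K as an iterated integral in y
  have hK1 : K = ∫⁻ y in s, (plusPart ν (Set.Ioi (z - y)) * plusPart ν (Set.Ioi y)) := by
    rw [hK, Measure.prod_apply hWmeas]
    apply lintegral_congr
    intro y
    have : Prod.mk y ⁻¹' W = Set.Ioi (z - y) ×ˢ Set.Ioi y := by
      ext p
      simp only [hW, mem_preimage, mem_setOf_eq, mem_prod, mem_Ioi]
    rw [this, hμ2, Measure.prod_prod]
  -- lower bound for K via the symmetric Fubini
  have hK2 : ENNReal.ofReal h * μ2 Bset ≤ K := by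
    rw [hK, Measure.prod_apply_symm hWmeas]
    have hpoint : ∀ p : ℝ × ℝ,
        Bset.indicator (fun _ => ENNReal.ofReal h) p
          ≤ (volume.restrict s) ((fun y => (y, p)) ⁻¹' W) := by
      intro p
      rcases Set.indicator_eq_zero_or_self Bset (fun _ => ENNReal.ofReal h) p with h0 | hp
      · rw [h0]; exact zero_le
      · by_cases hpB : p ∈ Bset
        · rw [Set.indicator_of_mem hpB]
          obtain ⟨hu, hv, huv⟩ := hpB
          set a := max h (z - p.1) with ha
          set b := min (z - h) p.2 with hb
          have hsec : (fun y => (y, p)) ⁻¹' W = Set.Ioi (z - p.1) ∩ Set.Iio p.2 := by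
            ext y
            simp only [hW, mem_preimage, mem_setOf_eq, mem_inter_iff, mem_Ioi, mem_Iio]
            constructor
            · rintro ⟨h1, h2⟩; exact ⟨by linarith, h2⟩
            · rintro ⟨h1, h2⟩; exact ⟨by linarith, h2⟩
            
          have hmeas_sec : MeasurableSet ((fun y => (y, p)) ⁻¹' W) := by
            rw [hsec]; exact measurableSet_Ioi.inter measurableSet_Iio
          rw [Measure.restrict_apply hmeas_sec]
          have hsub : Set.Ioo a b ⊆ ((fun y => (y, p)) ⁻¹' W) ∩ s := by
            intro y hy
            rw [hsec, hs]
            have h1 : a < y := hy.1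
            have h2 : y < b := hy.2
            have ha1 : h ≤ a := le_max_left _ _
            have ha2 : z - p.1 ≤ a := le_max_right _ _
            have hb1 : b ≤ z - h := min_le_left _ _
            have hb2 : b ≤ p.2 := min_le_right _ _
            refine ⟨?_, ?_⟩
            · exact ⟨show z - p.1 < y by linarith, show y < p.2 by linarith⟩
            · exact ⟨show h < y by linarith, show y ≤ z - h by linarith⟩
          have hlen : h ≤ b - a := by
            have hxz : x = z + h := by rw [hz]; ring
            rw [hxz] at huv
            rcases min_cases (z - h) p.2 with ⟨e1, e2⟩ | ⟨e1, e2⟩ <;>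
              rcases max_cases h (z - p.1) with ⟨f1, f2⟩ | ⟨f1, f2⟩ <;>
              rw [hb, ha, e1, f1] <;> linarith
          calc ENNReal.ofReal h ≤ ENNReal.ofReal (b - a) := ENNReal.ofReal_le_ofReal hlen
          _ = volume (Set.Ioo a b) := (Real.volume_Ioo).symm
          _ ≤ volume (((fun y => (y, p)) ⁻¹' W) ∩ s) := measure_mono hsub
        · rw [Set.indicator_of_notMem hpB]; exact zero_le
    calc ENNReal.ofReal h * μ2 Bset
        = ∫⁻ p, Bset.indicator (fun _ => ENNReal.ofReal h) p ∂μ2 := by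
          rw [lintegral_indicator hBmeas, setLIntegral_const, mul_comm]
    _ ≤ ∫⁻ p, (volume.restrict s) ((fun y => (y, p)) ⁻¹' W) ∂μ2 := lintegral_mono hpoint
    _ = ∫⁻ p, (volume.restrict s) {y | (y, p) ∈ W} ∂μ2 := rfl
  -- identify K with the real integral
  set I := ∫ y in h..(z - h), rtail ν (z - y) * rtail ν y with hI
  have hInn : 0 ≤ I := by
    apply intervalIntegral.integral_nonneg (by linarith)
    exact fun y _ => mul_nonneg (rtail_nonneg ν _) (rtail_nonneg ν _)
  have hKI : K = ENNReal.ofReal I := by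
    rw [hK1]
    have hcong : ∀ y ∈ s, (plusPart ν (Set.Ioi (z - y)) * plusPart ν (Set.Ioi y))
        = ENNReal.ofReal (rtail ν (z - y) * rtail ν y) := by
      intro y hy
      rw [hs, mem_Ioc] at hy
      rw [plusPart_Ioi ν (z - y) (by linarith [hy.1, hy.2]),
        plusPart_Ioi ν y (by linarith [hy.1]),
        ← ofReal_rtail ν (z - y), ← ofReal_rtail ν y,
        ← ENNReal.ofReal_mul (rtail_nonneg ν _)]
    rw [setLIntegral_congr_fun measurableSet_Ioc hcong]
    rw [← ofReal_integral_eq_lintegral_ofReal]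
    · rw [hI, intervalIntegral.integral_of_le (by linarith : h ≤ z - h)]
    · have := g_intervalIntegrable ν z h (z - h)
      rw [intervalIntegrable_iff_integrableOn_Ioc_of_le (by linarith : h ≤ z - h)] at this
      exact this
    · filter_upwards with y
      exact mul_nonneg (rtail_nonneg ν _) (rtail_nonneg ν _)
  -- bound on Bset
  have hBbound : μ2 Bset ≤ ENNReal.ofReal (I / h) := by
    rw [ENNReal.ofReal_div_of_pos hh]
    rw [ENNReal.le_div_iff_mul_le (Or.inl (by simp [hh.ne', ENNReal.ofReal_eq_zero]; linarith))
      (Or.inl ENNReal.ofReal_ne_top)]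
    rw [mul_comm]
    rw [hKI] at hK2
    exact hK2
  -- inclusion
  set A2 : Set (ℝ × ℝ) := Set.Ioi (x - 2*h) ×ˢ Set.univ with hA2
  set B2 : Set (ℝ × ℝ) := Set.univ ×ˢ Set.Ioi (x - 2*h) with hB2
  have hincl : {p : ℝ × ℝ | x < p.1 + p.2} ⊆ A2 ∪ B2 ∪ Bset := by
    rintro ⟨u, v⟩ huv
    simp only [mem_setOf_eq] at huv
    by_cases h1 : x - 2*h < u
    · exact Or.inl (Or.inl ⟨h1, trivial⟩)
    · by_cases h2 : x - 2*h < v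
      · exact Or.inl (Or.inr ⟨trivial, h2⟩)
      · push_neg at h1 h2
        exact Or.inr ⟨by linarith, by linarith, huv⟩
  have hA2m : μ2 A2 = ν (Set.Ioi (x - 2*h)) := by
    rw [hA2, hμ2, Measure.prod_prod, measure_univ, mul_one, plusPart_Ioi ν _ (by linarith)]
  have hB2m : μ2 B2 = ν (Set.Ioi (x - 2*h)) := by
    rw [hB2, hμ2, Measure.prod_prod, measure_univ, one_mul, plusPart_Ioi ν _ (by linarith)]
  have hfinal : μ2 {p : ℝ × ℝ | x < p.1 + p.2}
      ≤ ν (Set.Ioi (x - 2*h)) + ν (Set.Ioi (x - 2*h)) + ENNReal.ofReal (I / h) := by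
    calc μ2 {p : ℝ × ℝ | x < p.1 + p.2} ≤ μ2 (A2 ∪ B2 ∪ Bset) := measure_mono hincl
    _ ≤ μ2 (A2 ∪ B2) + μ2 Bset := measure_union_le _ _
    _ ≤ (μ2 A2 + μ2 B2) + μ2 Bset := add_le_add_left (measure_union_le _ _) _
    _ ≤ _ := by rw [hA2m, hB2m]; exact add_le_add_right hBbound _
  rw [mconv_Ioi, ← hμ2]
  have hto := ENNReal.toReal_mono (by finiteness) hfinal
  rw [ENNReal.toReal_add (by finiteness) ENNReal.ofReal_ne_top,
    ENNReal.toReal_add (by finiteness) (by finiteness),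
    ENNReal.toReal_ofReal (div_nonneg hInn hh.le)] at hto
  have hrt : (ν (Set.Ioi (x - 2*h))).toReal = rtail ν (x - 2*h) := rfl
  rw [hrt] at hto
  have hzz : z - h = x - 2*h := by rw [hz]; ring
  have hIeq : I = ∫ y in h..(x - 2*h), rtail ν (x - h - y) * rtail ν y := by
    rw [hI, hzz, hz]
  rw [hIeq] at hto
  linarith

lemma Iz_bound (h z : ℝ) (hh : 0 < h) (hz : 2 * h ≤ z) :
    (∫ y in h..(z - h), rtail ν (z - y) * rtail ν y)
      ≤ (∫ y in (0:ℝ)..z, rtail ν (z - y) * rtail ν y)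
        - 2 * (rtail ν z * ∫ y in (0:ℝ)..h, rtail ν y) := by
  have s1 := intervalIntegral.integral_add_adjacent_intervals
    (g_intervalIntegrable ν z 0 h) (g_intervalIntegrable ν z h (z - h))
  have s2 := intervalIntegral.integral_add_adjacent_intervals
    (g_intervalIntegrable ν z 0 (z - h)) (g_intervalIntegrable ν z (z - h) z)
  have hrefl := g_reflect ν z h
  have hA : rtail ν z * (∫ y in (0:ℝ)..h, rtail ν y)
      ≤ ∫ y in (0:ℝ)..h, rtail ν (z - y) * rtail ν y := by
    rw [← intervalIntegral.integral_const_mul]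
    apply intervalIntegral.integral_mono_on hh.le
      (((rtail_anti ν).intervalIntegrable).const_mul _) (g_intervalIntegrable ν z 0 h)
    intro y hy
    exact mul_le_mul_of_nonneg_right (rtail_anti ν (by linarith [hy.1])) (rtail_nonneg ν y)
  linarith


end Aux

/-- **Corollary (Klüppelberg)**: if a distribution function `G` on `ℝ` belongs to the
class `S*`, then `G` is subexponential. -/
theorem Sstar_subexponential (ν : Measure ℝ) [IsProbabilityMeasure ν]
    (h : MemSstar ν) : Subexponential ν := by
  obtain ⟨hpos, h2⟩ := h
  obtain ⟨hint, hm⟩ := sstar_aux ν ⟨hpos, h2⟩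
  have hLT := longtailed ν h2 hpos hint hm
  have hphi := psi_tendsto ν h2 hpos hm
  have hr0 := rtail_tendsto_zero ν hint
  set m := ∫ y in Set.Ioi (0:ℝ), rtail ν y with hmdef
  constructor
  · intro x
    rcases lt_or_ge x 0 with hx | hx
    · rw [plusPart_Ioi_neg ν x hx]; norm_num
    · rw [plusPart_Ioi ν x hx]; exact hpos x
  · -- main limit
    set f' : ℝ → ℝ := fun x =>
      ((mconv (plusPart ν) (plusPart ν)) (Set.Ioi x)).toReal / rtail ν x with hf'
    have hf'nonneg : ∀ x, 0 ≤ f' x := fun x =>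
      div_nonneg ENNReal.toReal_nonneg (rtail_nonneg ν x)
    -- upper bound function for a given h
    have hupper : ∀ h : ℝ, 1 ≤ h →
        (∀ᶠ x in Filter.atTop, f' x
          ≤ 2 * (rtail ν (x - 2*h) / rtail ν x)
            + (((∫ y in (0:ℝ)..(x - h), rtail ν (x - h - y) * rtail ν y) /
                  (2 * rtail ν (x - h))) * 2 * (rtail ν (x - h) / rtail ν x)
                - 2 * (∫ y in (0:ℝ)..h, rtail ν y) * (rtail ν (x - h) / rtail ν x)) / h) := by
      intro h hh1
      have hh : 0 < h := lt_of_lt_of_le one_pos hh1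
      filter_upwards [Filter.eventually_ge_atTop (4*h)] with x hx
      have hrx : 0 < rtail ν x := rtail_pos ν hpos x
      have hrxh : 0 < rtail ν (x - h) := rtail_pos ν hpos (x - h)
      have hzge : 2 * h ≤ x - h := by linarith
      have hIz := Iz_bound ν h (x - h) hh hzge
      rw [show x - h - h = x - 2*h by ring] at hIz
      have hconv := conv_upper ν h x hh hx
      have hC : ((mconv (plusPart ν) (plusPart ν)) (Set.Ioi x)).toReal
          ≤ 2 * rtail ν (x - 2*h)
            + ((∫ y in (0:ℝ)..(x - h), rtail ν (x - h - y) * rtail ν y)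
               - 2 * (rtail ν (x - h) * ∫ y in (0:ℝ)..h, rtail ν y)) / h := by
        refine hconv.trans ?_
        gcongr
        all_goals first | exact hIz | exact hh | exact hh.le | positivity
      calc f' x ≤ (2 * rtail ν (x - 2*h)
            + ((∫ y in (0:ℝ)..(x - h), rtail ν (x - h - y) * rtail ν y)
               - 2 * (rtail ν (x - h) * ∫ y in (0:ℝ)..h, rtail ν y)) / h) / rtail ν x :=
          (div_le_div_iff_of_pos_right hrx).mpr hC
      _ = _ := by
          field_simp
    -- upper limit function
    have hUlim : ∀ h : ℝ, 1 ≤ h →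
        Filter.Tendsto (fun x : ℝ =>
          2 * (rtail ν (x - 2*h) / rtail ν x)
            + (((∫ y in (0:ℝ)..(x - h), rtail ν (x - h - y) * rtail ν y) /
                  (2 * rtail ν (x - h))) * 2 * (rtail ν (x - h) / rtail ν x)
                - 2 * (∫ y in (0:ℝ)..h, rtail ν y) * (rtail ν (x - h) / rtail ν x)) / h)
          Filter.atTop
          (nhds (2 + (m * 2 - 2 * (∫ y in (0:ℝ)..h, rtail ν y)) / h)) := by
      intro h hh1
      have hh : 0 < h := lt_of_lt_of_le one_pos hh1
      have T1 : Filter.Tendsto (fun x : ℝ => rtail ν (x - 2*h) / rtail ν x)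
          Filter.atTop (nhds 1) := hLT (2*h) (by linarith)
      have T3 : Filter.Tendsto (fun x : ℝ => rtail ν (x - h) / rtail ν x)
          Filter.atTop (nhds 1) := hLT h hh
      have hshift : Filter.Tendsto (fun x : ℝ => x - h) Filter.atTop Filter.atTop :=
        tendsto_atTop_add_const_right Filter.atTop (-h) tendsto_id
      have T2 : Filter.Tendsto (fun x : ℝ =>
          (∫ y in (0:ℝ)..(x - h), rtail ν (x - h - y) * rtail ν y) /
            (2 * rtail ν (x - h))) Filter.atTop (nhds m) := hphi.comp hshift
      have := ((T1.const_mul 2).add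
        ((((T2.mul_const 2).mul T3).sub ((T3.const_mul (2 * (∫ y in (0:ℝ)..h, rtail ν y))))).div_const h))
      convert this using 2 <;> ring
    -- lower asymptotic bound
    have hlow : ∀ᶠ x in Filter.atTop, 2 - rtail ν x ≤ f' x := by
      filter_upwards [Filter.eventually_ge_atTop (0:ℝ)] with x hx
      have hrx : 0 < rtail ν x := rtail_pos ν hpos x
      have hcl := conv_lower ν x hx
      rw [hf', le_div_iff₀ hrx]
      nlinarith [hcl]
    have hflow : Filter.Tendsto (fun x : ℝ => 2 - rtail ν x) Filter.atTop (nhds 2) := by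
      have := (tendsto_const_nhds (x := (2:ℝ)) (f := Filter.atTop)).sub hr0
      simpa using this
    have hbddBelow : Filter.IsBoundedUnder (· ≥ ·) Filter.atTop f' :=
      Filter.isBoundedUnder_of ⟨0, fun x => hf'nonneg x⟩
    have hbddAbove : Filter.IsBoundedUnder (· ≤ ·) Filter.atTop f' :=
      ((hUlim 1 le_rfl).isBoundedUnder_le).mono_le (hupper 1 le_rfl)
    have hcobdd : Filter.IsCoboundedUnder (· ≤ ·) Filter.atTop f' :=
      hbddBelow.isCoboundedUnder_le
    have hliminf : 2 ≤ Filter.liminf f' Filter.atTop := by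
      have h1 : Filter.liminf (fun x : ℝ => 2 - rtail ν x) Filter.atTop = 2 := hflow.liminf_eq
      rw [← h1]
      exact Filter.liminf_le_liminf hlow hflow.isBoundedUnder_ge
        hbddAbove.isCoboundedUnder_ge
    have hlimsup : Filter.limsup f' Filter.atTop ≤ 2 := by
      apply le_of_forall_pos_le_add
      intro ε hε
      have hmh : Filter.Tendsto (fun b : ℝ => ∫ y in (0:ℝ)..b, rtail ν y)
          Filter.atTop (nhds m) :=
        intervalIntegral_tendsto_integral_Ioi 0 hint tendsto_id
      have hev : ∀ᶠ b : ℝ in Filter.atTop, m - ε/4 < ∫ y in (0:ℝ)..b, rtail ν y :=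
        hmh.eventually (eventually_gt_nhds (by linarith))
      obtain ⟨h, hh1, hhe⟩ := ((Filter.eventually_ge_atTop (1:ℝ)).and hev).exists
      have hh0 : 0 < h := lt_of_lt_of_le one_pos hh1
      have step := Filter.limsup_le_limsup (hupper h hh1) hcobdd
        ((hUlim h hh1).isBoundedUnder_le)
      rw [(hUlim h hh1).limsup_eq] at step
      refine step.trans ?_
      set mh := ∫ y in (0:ℝ)..h, rtail ν y with hmhd
      have harith : (m * 2 - 2 * mh) / h ≤ ε := by
        rcases le_or_gt (m * 2 - 2 * mh) 0 with hc | hc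
        · have : (m * 2 - 2 * mh) / h ≤ 0 := div_nonpos_of_nonpos_of_nonneg hc hh0.le
          linarith
        · have h1 : (m * 2 - 2 * mh) / h ≤ m * 2 - 2 * mh := div_le_self hc.le hh1
          linarith
      linarith
    have htend : Filter.Tendsto f' Filter.atTop (nhds 2) :=
      tendsto_of_le_liminf_of_limsup_le hliminf hlimsup hbddAbove hbddBelow
    apply htend.congr'
    filter_upwards [Filter.eventually_ge_atTop (0:ℝ)] with x hx
    rw [hf', rtail_plusPart ν x hx]
end
end

section
/- Let σ be a stopping time with E σ < ∞. Then lim_{x→∞} P(A_{σ,1}(x))/F̄(x) = E σ. -/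
open MeasureTheory ProbabilityTheory Filter Set
open scoped ENNReal ENat

noncomputable section

/-- The event `A_{σ,1}(x) = {μ(x) ≤ σ, S_{μ(x)-1} ≤ h(x)}`, where
`μ(x) = min{n : S_n > x}` is the first passage time over level `x`. -/
def eventA1 {Ω : Type*} (ξ : ℕ → Ω → ℝ) (σ : Ω → ℕ) (h : ℝ → ℝ) (x : ℝ) : Set Ω :=
  {ω | ∃ n : ℕ, n ≤ σ ω ∧ (∀ k, k < n → walk ξ k ω ≤ x) ∧ x < walk ξ n ω ∧
    walk ξ (n - 1) ω ≤ h x}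

/- ------------------------------------------------------------------ -/
/- Auxiliary material for the proof of `eventA1_asymptotics`. -/

namespace FZ

lemma rtail_pos (μ : Measure ℝ) [IsProbabilityMeasure μ] (hpos : ∀ x, 0 < μ (Set.Ioi x))
    (x : ℝ) : 0 < rtail μ x :=
  ENNReal.toReal_pos (hpos x).ne' (measure_ne_top μ _)

lemma rtail_anti (μ : Measure ℝ) [IsProbabilityMeasure μ] : Antitone (rtail μ) :=
  fun _ _ hab => ENNReal.toReal_mono (measure_ne_top μ _)
    (measure_mono (Set.Ioi_subset_Ioi hab))

lemma rtail_ratio_tendsto (μ : Measure ℝ) [IsProbabilityMeasure μ] (hlt : LongTailed μ)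
    (s : ℝ) : Tendsto (fun x => rtail μ (x - s) / rtail μ x) atTop (nhds 1) := by
  rcases lt_trichotomy s 0 with hs | hs | hs
  · have h1 := hlt.2 (-s) (by linarith)
    have h2 : Tendsto (fun x : ℝ => rtail μ ((x + -s) - -s) / rtail μ (x + -s)) atTop (nhds 1) :=
      h1.comp (tendsto_atTop_add_const_right _ (-s) tendsto_id)
    have h3 : Tendsto (fun x : ℝ => (rtail μ ((x + -s) - -s) / rtail μ (x + -s))⁻¹)
        atTop (nhds 1) := by
      have := h2.inv₀ (one_ne_zero)
      simpa using this
    refine h3.congr fun x => ?_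
    rw [inv_div]
    congr 1 <;> ring_nf
  · subst hs
    have heq : (fun x : ℝ => rtail μ (x - 0) / rtail μ x) = fun _ => 1 := by
      funext x
      rw [sub_zero, div_self (rtail_pos μ hlt.1 x).ne']
    rw [heq]
    exact tendsto_const_nhds
  · exact hlt.2 s hs

lemma indep_slice {Ω : Type*} (𝓖 : MeasurableSpace Ω) [MeasurableSpace Ω]
    (P : Measure Ω) [IsProbabilityMeasure P]
    (X : Ω → ℝ) (hX : Measurable X) (h𝓖 : 𝓖 ≤ ‹MeasurableSpace Ω›)
    (hindep : Indep (MeasurableSpace.comap X inferInstance) 𝓖 P)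
    (T : Ω → ℝ) (hT : Measurable[𝓖] T) (C : Set Ω) (hC : MeasurableSet[𝓖] C) :
    P (C ∩ {ω | T ω < X ω}) = ∫⁻ ω in C, (P.map X) (Set.Ioi (T ω)) ∂P := by
  classical
  set ν := P.map X with hν
  set W : Ω → ℝ × ℝ := fun ω => (T ω, C.indicator (fun _ => (1:ℝ)) ω) with hWdef
  have hWG : Measurable[𝓖] W := hT.prodMk ((measurable_const).indicator hC)
  have hW : Measurable W := hWG.mono h𝓖 le_rfl
  have hIF : IndepFun W X P := by
    have h1 : Indep (MeasurableSpace.comap X inferInstance)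
        (MeasurableSpace.comap W inferInstance) P :=
      indep_of_indep_of_le_right hindep hWG.comap_le
    exact h1.symm
  have hmap : P.map (fun ω => (W ω, X ω)) = (P.map W).prod ν :=
    (indepFun_iff_map_prod_eq_prod_map_map hW.aemeasurable hX.aemeasurable).1 hIF
  set S' : Set ((ℝ × ℝ) × ℝ) := {p | p.1.2 = 1 ∧ p.1.1 < p.2} with hS'def
  have hS' : MeasurableSet S' := by
    have h1 : MeasurableSet {p : (ℝ × ℝ) × ℝ | p.1.2 = 1} :=
      (measurable_fst.snd) (measurableSet_singleton 1)
    have h2 : MeasurableSet {p : (ℝ × ℝ) × ℝ | p.1.1 < p.2} :=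
      measurableSet_lt measurable_fst.fst measurable_snd
    exact h1.inter h2
  have hpre : C ∩ {ω | T ω < X ω} = (fun ω => (W ω, X ω)) ⁻¹' S' := by
    ext ω
    simp only [Set.mem_inter_iff, Set.mem_setOf_eq, Set.mem_preimage, hS'def, hWdef,
      Set.indicator_apply]
    by_cases hωC : ω ∈ C <;> simp [hωC]
  have hmeaspair : Measurable (fun ω => (W ω, X ω)) := hW.prodMk hX
  rw [hpre, ← Measure.map_apply hmeaspair hS', hmap, Measure.prod_apply hS']
  have hslice : ∀ w : ℝ × ℝ, (Prod.mk w ⁻¹' S') = if w.2 = 1 then Set.Ioi w.1 else ∅ := by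
    intro w
    ext u
    by_cases hw : w.2 = 1 <;> simp [hS'def, hw]
  have hint1 : ∫⁻ w, ν (Prod.mk w ⁻¹' S') ∂(P.map W)
      = ∫⁻ w, (if w.2 = 1 then ν (Set.Ioi w.1) else 0) ∂(P.map W) := by
    refine lintegral_congr fun w => ?_
    rw [hslice w]
    by_cases hw : w.2 = 1 <;> simp [hw]
  have hfmeas : Measurable (fun w : ℝ × ℝ => (if w.2 = 1 then ν (Set.Ioi w.1) else 0)) := by
    refine Measurable.ite (measurable_snd (measurableSet_singleton 1)) ?_ measurable_const
    have hanti : Antitone (fun t : ℝ => ν (Set.Ioi t)) := fun a b hab =>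
      measure_mono (Set.Ioi_subset_Ioi hab)
    exact hanti.measurable.comp measurable_fst
  rw [hint1, lintegral_map hfmeas hW]
  have heq : ∀ ω, (if (W ω).2 = 1 then ν (Set.Ioi (W ω).1) else 0)
      = C.indicator (fun ω' => ν (Set.Ioi (T ω'))) ω := by
    intro ω
    simp only [hWdef, Set.indicator_apply]
    by_cases hωC : ω ∈ C <;> simp [hωC]
  simp_rw [heq]
  rw [lintegral_indicator (h𝓖 _ hC)]

lemma tsum_indicator_lt (m : ℕ) : ∑' n : ℕ, (if n < m then (1:ℝ≥0∞) else 0) = m := by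
  rw [tsum_eq_sum (s := Finset.range m)
    (fun b hb => if_neg (by simpa [Finset.mem_range] using hb))]
  rw [Finset.sum_ite_of_true (fun b hb => Finset.mem_range.1 hb)]
  simp

lemma lintegral_nat {Ω : Type*} [MeasurableSpace Ω] (P : Measure Ω) (σ : Ω → ℕ)
    (hσ : ∀ n, MeasurableSet {ω | n < σ ω}) :
    ∫⁻ ω, ((σ ω : ℕ) : ℝ≥0∞) ∂P = ∑' n, P {ω | n < σ ω} := by
  have key : ∀ ω, ((σ ω : ℕ) : ℝ≥0∞)
      = ∑' n : ℕ, Set.indicator {ω' | n < σ ω'} (fun _ => (1:ℝ≥0∞)) ω := by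
    intro ω
    have h0 : (fun n => Set.indicator {ω' | n < σ ω'} (fun _ => (1:ℝ≥0∞)) ω)
        = fun n => if n < σ ω then 1 else 0 := by
      funext n; simp [Set.indicator_apply]
    rw [h0, tsum_indicator_lt (σ ω)]
  calc ∫⁻ ω, ((σ ω : ℕ) : ℝ≥0∞) ∂P
      = ∫⁻ ω, ∑' n, Set.indicator {ω' | n < σ ω'} (fun _ => (1:ℝ≥0∞)) ω ∂P :=
        lintegral_congr key
    _ = ∑' n, ∫⁻ ω, Set.indicator {ω' | n < σ ω'} (fun _ => (1:ℝ≥0∞)) ω ∂P :=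
        lintegral_tsum (fun n => (measurable_const.indicator (hσ n)).aemeasurable)
    _ = ∑' n, P {ω | n < σ ω} := by
        refine tsum_congr fun n => ?_
        rw [lintegral_indicator (hσ n)]
        simp

/-- The event that the walk first crosses `x` at time `n+1`, staying below `h x` at time `n`,
with `σ > n`. -/
def C {Ω : Type*} (ξ : ℕ → Ω → ℝ) (σ : Ω → ℕ) (h : ℝ → ℝ) (n : ℕ) (x : ℝ) : Set Ω :=
  ({ω | n < σ ω} ∩ {ω | ∀ k, k < n + 1 → walk ξ k ω ≤ x}) ∩ {ω | walk ξ n ω ≤ h x}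

def E {Ω : Type*} (ξ : ℕ → Ω → ℝ) (σ : Ω → ℕ) (h : ℝ → ℝ) (n : ℕ) (x : ℝ) : Set Ω :=
  C ξ σ h n x ∩ {ω | x - walk ξ n ω < ξ n ω}

def D {Ω : Type*} (ξ : ℕ → Ω → ℝ) (σ : Ω → ℕ) (h : ℝ → ℝ) (n : ℕ) (x : ℝ) : Set Ω :=
  {ω | n < σ ω} ∩ {ω | ∀ k, k < n + 1 → walk ξ k ω ≤ h x}

lemma walk_succ {Ω : Type*} (ξ : ℕ → Ω → ℝ) (n : ℕ) (ω : Ω) :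
    walk ξ (n + 1) ω = walk ξ n ω + ξ n ω := Finset.sum_range_succ _ _

lemma walk_zero {Ω : Type*} (ξ : ℕ → Ω → ℝ) (ω : Ω) : walk ξ 0 ω = 0 := by
  simp [walk]

lemma mem_E_iff {Ω : Type*} {ξ : ℕ → Ω → ℝ} {σ : Ω → ℕ} {h : ℝ → ℝ} {n : ℕ} {x : ℝ} {ω : Ω} :
    ω ∈ E ξ σ h n x ↔ n < σ ω ∧ (∀ k, k < n + 1 → walk ξ k ω ≤ x) ∧
      walk ξ n ω ≤ h x ∧ x < walk ξ (n + 1) ω := by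
  constructor
  · rintro ⟨⟨⟨h1, h2⟩, h3⟩, h4⟩
    refine ⟨h1, h2, h3, ?_⟩
    rw [walk_succ]
    simp only [Set.mem_setOf_eq] at h4
    linarith
  · rintro ⟨h1, h2, h3, h4⟩
    rw [walk_succ] at h4
    exact ⟨⟨⟨h1, h2⟩, h3⟩, by simp only [Set.mem_setOf_eq]; linarith⟩

lemma decomp {Ω : Type*} (ξ : ℕ → Ω → ℝ) (σ : Ω → ℕ) (h : ℝ → ℝ) (x : ℝ) (hx : 0 ≤ x) :
    eventA1 ξ σ h x = ⋃ n : ℕ, E ξ σ h n x := by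
  ext ω
  simp only [eventA1, Set.mem_setOf_eq, Set.mem_iUnion]
  constructor
  · rintro ⟨m, hm1, hm2, hm3, hm4⟩
    obtain ⟨n, rfl⟩ : ∃ n, m = n + 1 := by
      cases m with
      | zero => exact absurd hm3 (by rw [walk_zero]; linarith)
      | succ n => exact ⟨n, rfl⟩
    refine ⟨n, mem_E_iff.2 ⟨hm1, hm2, ?_, hm3⟩⟩
    simpa using hm4
  · rintro ⟨n, hn⟩
    obtain ⟨h1, h2, h3, h4⟩ := mem_E_iff.1 hn
    exact ⟨n + 1, h1, h2, h4, by simpa using h3⟩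

lemma E_disjoint {Ω : Type*} (ξ : ℕ → Ω → ℝ) (σ : Ω → ℕ) (h : ℝ → ℝ) (x : ℝ) :
    Pairwise (Function.onFun Disjoint (fun n => E ξ σ h n x)) := by
  have key : ∀ n m : ℕ, n < m → Disjoint (E ξ σ h n x) (E ξ σ h m x) := by
    intro n m hnm
    rw [Set.disjoint_left]
    intro ω hn hm
    obtain ⟨_, _, _, h4⟩ := mem_E_iff.1 hn
    obtain ⟨_, h2', _, _⟩ := mem_E_iff.1 hm
    exact absurd (h2' (n + 1) (by omega)) (by linarith)
  intro n m hnm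
  rcases hnm.lt_or_gt with hlt | hlt
  · exact key n m hlt
  · exact (key m n hlt).symm

end FZ
/-- **Lemma 1** (Foss–Zachary).  Under NEG and LT, with `h : ℝ₊ → ℝ₊` satisfying
`h(x) ≤ x/2`, `h(x) → ∞` and `F̄(x - h(x))/F̄(x) → 1`, for any stopping time `σ` with
`E σ < ∞` one has `P(A_{σ,1}(x))/F̄(x) → E σ` as `x → ∞`. -/
theorem eventA1_asymptotics
    {Ω : Type*} [MeasurableSpace Ω] (P : Measure Ω) [IsProbabilityMeasure P]
    (ξ : ℕ → Ω → ℝ) (μ : Measure ℝ) [IsProbabilityMeasure μ]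
    (hmeas : ∀ n, Measurable (ξ n))
    (hlaw : ∀ n, P.map (ξ n) = μ)
    (hiid : iIndepFun ξ P)
    (m : ℝ) (hm : 0 < m) (hint : Integrable id μ) (hmean : (∫ x, x ∂μ) = -m)
    (hlt : LongTailed μ)
    (h : ℝ → ℝ) (hh0 : ∀ x, 0 ≤ h x) (hh1 : ∀ x, 0 ≤ x → h x ≤ x / 2)
    (hh2 : Filter.Tendsto h Filter.atTop Filter.atTop)
    (hh3 : Filter.Tendsto (fun x => rtail μ (x - h x) / rtail μ x) Filter.atTop (nhds 1))
    (𝓕 : ℕ → MeasurableSpace Ω) (hFmono : Monotone 𝓕)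
    (hFle : ∀ n, 𝓕 n ≤ ‹MeasurableSpace Ω›)
    (hFadapt : ∀ n, Measurable[𝓕 (n + 1)] (ξ n))
    (hFindep : ∀ n, Indep (MeasurableSpace.comap (ξ n) inferInstance) (𝓕 n) P)
    (σ : Ω → ℕ) (hstop : ∀ n : ℕ, MeasurableSet[𝓕 n] {ω | σ ω ≤ n})
    (hσint : Integrable (fun ω => (σ ω : ℝ)) P) :
    Filter.Tendsto (fun x : ℝ => (P (eventA1 ξ σ h x)).toReal / rtail μ x)
      Filter.atTop (nhds (∫ ω, (σ ω : ℝ) ∂P)) := by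
  classical
  have hFpos : ∀ x, 0 < rtail μ x := fun x => FZ.rtail_pos μ hlt.1 x
  have hFanti : Antitone (rtail μ) := FZ.rtail_anti μ
  set Eσ : ℝ := ∫ ω, (σ ω : ℝ) ∂P with hEσdef
  have hEσnn : 0 ≤ Eσ := integral_nonneg (fun ω => Nat.cast_nonneg _)
  -- measurability of walks
  have hwalkF : ∀ n k, k ≤ n → Measurable[𝓕 n] (walk ξ k) := by
    intro n k hk
    unfold walk
    refine Finset.measurable_sum _ fun i hi => (hFadapt i).mono (hFmono ?_) le_rfl
    have := Finset.mem_range.mp hi; omega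
  have hwalk : ∀ k, Measurable (walk ξ k) := fun k => (hwalkF k k le_rfl).mono (hFle k) le_rfl
  have hσsetF : ∀ n, MeasurableSet[𝓕 n] {ω | n < σ ω} := by
    intro n
    have heq : {ω | n < σ ω} = {ω | σ ω ≤ n}ᶜ := by ext ω; simp [not_le]
    rw [heq]; exact (hstop n).compl
  have hσset : ∀ n, MeasurableSet {ω | n < σ ω} := fun n => hFle n _ (hσsetF n)
  -- measurability of the events
  have hCF : ∀ n x, MeasurableSet[𝓕 n] (FZ.C ξ σ h n x) := by
    intro n x
    refine MeasurableSet.inter (MeasurableSet.inter (hσsetF n) ?_) ?_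
    · have heq : {ω | ∀ k, k < n + 1 → walk ξ k ω ≤ x}
          = ⋂ k, ⋂ (_ : k < n + 1), {ω | walk ξ k ω ≤ x} := by
        ext ω; simp
      rw [heq]
      exact MeasurableSet.iInter fun k => MeasurableSet.iInter fun hk =>
        measurableSet_le (hwalkF n k (by omega)) measurable_const
    · exact measurableSet_le (hwalkF n n le_rfl) measurable_const
  have hDF : ∀ n x, MeasurableSet[𝓕 n] (FZ.D ξ σ h n x) := by
    intro n x
    refine MeasurableSet.inter (hσsetF n) ?_
    have heq : {ω | ∀ k, k < n + 1 → walk ξ k ω ≤ h x}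
        = ⋂ k, ⋂ (_ : k < n + 1), {ω | walk ξ k ω ≤ h x} := by
      ext ω; simp
    rw [heq]
    exact MeasurableSet.iInter fun k => MeasurableSet.iInter fun hk =>
      measurableSet_le (hwalkF n k (by omega)) measurable_const
  have hCmeas : ∀ n x, MeasurableSet (FZ.C ξ σ h n x) := fun n x => hFle n _ (hCF n x)
  have hDmeas : ∀ n x, MeasurableSet (FZ.D ξ σ h n x) := fun n x => hFle n _ (hDF n x)
  have hEmeas : ∀ n x, MeasurableSet (FZ.E ξ σ h n x) := by
    intro n x
    exact (hCmeas n x).inter (measurableSet_lt (measurable_const.sub (hwalk n)) (hmeas n))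
  -- the key identity via independence
  have hkey : ∀ n x, P (FZ.E ξ σ h n x)
      = ∫⁻ ω in FZ.C ξ σ h n x, μ (Set.Ioi (x - walk ξ n ω)) ∂P := by
    intro n x
    have hsl := FZ.indep_slice (𝓕 n) P (ξ n) (hmeas n) (hFle n) (hFindep n)
      (fun ω => x - walk ξ n ω) (measurable_const.sub (hwalkF n n le_rfl))
      (FZ.C ξ σ h n x) (hCF n x)
    rw [hlaw n] at hsl
    exact hsl
  -- decomposition of the event
  have hdecomp : ∀ x, 0 ≤ x → P (eventA1 ξ σ h x) = ∑' n, P (FZ.E ξ σ h n x) := by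
    intro x hx
    rw [FZ.decomp ξ σ h x hx]
    exact measure_iUnion (FZ.E_disjoint ξ σ h x) (fun n => hEmeas n x)
  -- expectation of σ as a sum of tail probabilities
  have hΛeq : ∫⁻ ω, ENNReal.ofReal ((σ ω : ℝ)) ∂P = ∑' n, P {ω | n < σ ω} := by
    have heq : (fun ω => ENNReal.ofReal ((σ ω : ℝ))) = fun ω => ((σ ω : ℕ) : ℝ≥0∞) := by
      funext ω; exact ENNReal.ofReal_natCast _
    rw [heq]
    exact FZ.lintegral_nat P σ hσset
  have hΛfin : (∑' n, P {ω | n < σ ω}) ≠ ∞ := by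
    rw [← hΛeq]; exact hσint.lintegral_lt_top.ne
  have hEσ' : Eσ = (∑' n, P {ω | n < σ ω}).toReal := by
    rw [hEσdef, integral_eq_lintegral_of_nonneg_ae (ae_of_all _ fun ω => Nat.cast_nonneg _)
      hσint.aestronglyMeasurable, hΛeq]
  set q : ℕ → ℝ := fun n => (P {ω | n < σ ω}).toReal with hq
  have hqsummable : Summable q := ENNReal.summable_toReal hΛfin
  have hqsum : HasSum q Eσ := by
    have hs := hqsummable.hasSum
    have heq : ∑' n, q n = Eσ := by
      rw [hEσ', ENNReal.tsum_toReal_eq (fun n => measure_ne_top _ _)]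
    rwa [heq] at hs
  -- upper bound
  have hupper : ∀ x, 0 ≤ x → (P (eventA1 ξ σ h x)).toReal ≤ rtail μ (x - h x) * Eσ := by
    intro x hx
    have hb : ∀ n, P (FZ.E ξ σ h n x) ≤ μ (Set.Ioi (x - h x)) * P {ω | n < σ ω} := by
      intro n
      rw [hkey n x]
      calc ∫⁻ ω in FZ.C ξ σ h n x, μ (Set.Ioi (x - walk ξ n ω)) ∂P
          ≤ ∫⁻ _ω in FZ.C ξ σ h n x, μ (Set.Ioi (x - h x)) ∂P := by
            refine setLIntegral_mono' (hCmeas n x) fun ω hω => ?_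
            refine measure_mono (Set.Ioi_subset_Ioi ?_)
            have hw : walk ξ n ω ≤ h x := hω.2
            linarith
        _ = μ (Set.Ioi (x - h x)) * P (FZ.C ξ σ h n x) := setLIntegral_const _ _
        _ ≤ μ (Set.Ioi (x - h x)) * P {ω | n < σ ω} :=
            mul_le_mul_right (measure_mono fun ω hω => hω.1.1) _
    have h1 : P (eventA1 ξ σ h x) ≤ μ (Set.Ioi (x - h x)) * ∑' n, P {ω | n < σ ω} := by
      rw [hdecomp x hx, ← ENNReal.tsum_mul_left]
      exact ENNReal.tsum_le_tsum hb
    have hfin : μ (Set.Ioi (x - h x)) * ∑' n, P {ω | n < σ ω} ≠ ∞ :=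
      ENNReal.mul_ne_top (measure_ne_top _ _) hΛfin
    have h2 := ENNReal.toReal_mono hfin h1
    rw [ENNReal.toReal_mul] at h2
    rw [hEσ']
    exact h2
  -- lower bound by partial sums
  set b : ℕ → ℝ → ℝ := fun n x =>
    (∫⁻ ω in FZ.D ξ σ h n x, μ (Set.Ioi (x - walk ξ n ω)) ∂P).toReal / rtail μ x with hbdef
  have hDC : ∀ n x, 0 ≤ x → FZ.D ξ σ h n x ⊆ FZ.C ξ σ h n x := by
    intro n x hx ω hω
    have hhx : h x ≤ x := le_trans (hh1 x hx) (by linarith)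
    exact ⟨⟨hω.1, fun k hk => le_trans (hω.2 k hk) hhx⟩, hω.2 n (lt_add_one n)⟩
  have hlower : ∀ N x, 0 ≤ x →
      (∑ n ∈ Finset.range N, b n x) ≤ (P (eventA1 ξ σ h x)).toReal / rtail μ x := by
    intro N x hx
    have h1 : ∀ n, (∫⁻ ω in FZ.D ξ σ h n x, μ (Set.Ioi (x - walk ξ n ω)) ∂P)
        ≤ P (FZ.E ξ σ h n x) := by
      intro n
      rw [hkey n x]
      exact lintegral_mono_set (hDC n x hx)
    have h2 : (∑ n ∈ Finset.range N, ∫⁻ ω in FZ.D ξ σ h n x, μ (Set.Ioi (x - walk ξ n ω)) ∂P)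
        ≤ P (eventA1 ξ σ h x) := by
      rw [hdecomp x hx]
      exact le_trans (Finset.sum_le_sum fun n _ => h1 n) (ENNReal.sum_le_tsum _)
    have hfin : ∀ n, (∫⁻ ω in FZ.D ξ σ h n x, μ (Set.Ioi (x - walk ξ n ω)) ∂P) ≠ ∞ :=
      fun n => (lt_of_le_of_lt (h1 n) (measure_lt_top P _)).ne
    have h3 : (∑ n ∈ Finset.range N,
        (∫⁻ ω in FZ.D ξ σ h n x, μ (Set.Ioi (x - walk ξ n ω)) ∂P).toReal)
        ≤ (P (eventA1 ξ σ h x)).toReal := by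
      rw [← ENNReal.toReal_sum (fun n _ => hfin n)]
      exact ENNReal.toReal_mono (measure_ne_top P _) h2
    calc ∑ n ∈ Finset.range N, b n x
        = (∑ n ∈ Finset.range N,
            (∫⁻ ω in FZ.D ξ σ h n x, μ (Set.Ioi (x - walk ξ n ω)) ∂P).toReal) / rtail μ x := by
          rw [Finset.sum_div]
      _ ≤ (P (eventA1 ξ σ h x)).toReal / rtail μ x := by
          gcongr
          exact (hFpos x).le
  -- per-n limit
  have hblim : ∀ n, Tendsto (fun x => b n x) atTop (nhds (q n)) := by
    intro n
    have hbeq : ∀ x, b n x = ∫ ω, Set.indicator (FZ.D ξ σ h n x)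
        (fun ω' => rtail μ (x - walk ξ n ω') / rtail μ x) ω ∂P := by
      intro x
      have hmg : AEMeasurable (fun ω => μ (Set.Ioi (x - walk ξ n ω)))
          (P.restrict (FZ.D ξ σ h n x)) := by
        have hanti : Antitone (fun t : ℝ => μ (Set.Ioi t)) := fun a b hab =>
          measure_mono (Set.Ioi_subset_Ioi hab)
        exact (hanti.measurable.comp (measurable_const.sub (hwalk n))).aemeasurable
      have h1 : (∫⁻ ω in FZ.D ξ σ h n x, μ (Set.Ioi (x - walk ξ n ω)) ∂P).toReal
          = ∫ ω in FZ.D ξ σ h n x, (μ (Set.Ioi (x - walk ξ n ω))).toReal ∂P :=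
        (integral_toReal hmg (ae_of_all _ fun ω => measure_lt_top μ _)).symm
      rw [hbdef]
      simp only
      rw [h1, ← integral_div, ← integral_indicator (hDmeas n x)]
      rfl
    have hqeq : q n = ∫ ω, Set.indicator {ω' | n < σ ω'} (fun _ => (1:ℝ)) ω ∂P := by
      rw [integral_indicator_const (1:ℝ) (hσset n)]
      simp [hq, measureReal_def]
    rw [hqeq]
    refine Tendsto.congr (fun x => (hbeq x).symm) ?_
    refine tendsto_integral_filter_of_dominated_convergence (bound := fun _ => (2:ℝ))
      ?_ ?_ (integrable_const _) ?_
    · refine Eventually.of_forall fun x => ?_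
      refine (Measurable.aestronglyMeasurable ?_)
      refine Measurable.indicator ?_ (hDmeas n x)
      exact (hFanti.measurable.comp (measurable_const.sub (hwalk n))).div_const _
    · have hR2 : ∀ᶠ x in atTop, rtail μ (x - h x) / rtail μ x < 2 :=
        hh3.eventually_lt_const (by norm_num)
      filter_upwards [hR2] with x hx
      refine ae_of_all _ fun ω => ?_
      rw [Real.norm_eq_abs]
      by_cases hω : ω ∈ FZ.D ξ σ h n x
      · rw [Set.indicator_of_mem hω]
        have hw : walk ξ n ω ≤ h x := hω.2 n (lt_add_one n)
        have hnum : rtail μ (x - walk ξ n ω) ≤ rtail μ (x - h x) := hFanti (by linarith)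
        have hnn : 0 ≤ rtail μ (x - walk ξ n ω) / rtail μ x :=
          div_nonneg ENNReal.toReal_nonneg (hFpos x).le
        rw [abs_of_nonneg hnn]
        calc rtail μ (x - walk ξ n ω) / rtail μ x
            ≤ rtail μ (x - h x) / rtail μ x := by gcongr; exact (hFpos x).le
          _ ≤ 2 := hx.le
      · rw [Set.indicator_of_notMem hω]
        simp
    · refine ae_of_all _ fun ω => ?_
      by_cases hn : n < σ ω
      · have hev : ∀ᶠ x in atTop, ω ∈ FZ.D ξ σ h n x := by
          have hB := hh2.eventually_ge_atTop
            ((Finset.range (n + 1)).sup' (Finset.nonempty_range_add_one) (fun k => walk ξ k ω))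
          filter_upwards [hB] with x hx
          exact ⟨hn, fun k hk =>
            le_trans (Finset.le_sup' (f := fun k => walk ξ k ω) (Finset.mem_range.2 hk)) hx⟩
        have hrat : Tendsto (fun x => rtail μ (x - walk ξ n ω) / rtail μ x) atTop (nhds 1) :=
          FZ.rtail_ratio_tendsto μ hlt _
        have hlim1 : Tendsto (fun x => Set.indicator (FZ.D ξ σ h n x)
            (fun ω' => rtail μ (x - walk ξ n ω') / rtail μ x) ω) atTop (nhds 1) := by
          refine hrat.congr' ?_
          filter_upwards [hev] with x hx
          exact (Set.indicator_of_mem hx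
            (fun ω' => rtail μ (x - walk ξ n ω') / rtail μ x)).symm
        have hone : ({ω' | n < σ ω'}.indicator (fun _ => (1:ℝ)) ω) = 1 :=
          Set.indicator_of_mem (show ω ∈ {ω' | n < σ ω'} from hn) _
        rw [hone]
        exact hlim1
      · have hnot : ∀ x, ω ∉ FZ.D ξ σ h n x := fun x hω => hn hω.1
        have heq0 : ∀ x : ℝ, Set.indicator (FZ.D ξ σ h n x)
            (fun ω' => rtail μ (x - walk ξ n ω') / rtail μ x) ω = 0 :=
          fun x => Set.indicator_of_notMem (hnot x) _
        have hzero : ({ω' | n < σ ω'}.indicator (fun _ => (1:ℝ)) ω) = 0 :=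
          Set.indicator_of_notMem (show ω ∉ {ω' | n < σ ω'} from hn) _
        rw [hzero]
        refine Tendsto.congr (fun x => (heq0 x).symm) tendsto_const_nhds
  -- final assembly
  rw [Metric.tendsto_nhds]
  intro ε hε
  obtain ⟨N, hN⟩ := (hqsum.tendsto_sum_nat.eventually_const_lt
    (show Eσ - ε / 2 < Eσ by linarith)).exists
  have hsumb : Tendsto (fun x => ∑ n ∈ Finset.range N, b n x) atTop
      (nhds (∑ n ∈ Finset.range N, q n)) :=
    tendsto_finset_sum _ fun n _ => hblim n
  have e1 : ∀ᶠ x : ℝ in atTop, (0:ℝ) ≤ x := eventually_ge_atTop 0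
  have e2 : ∀ᶠ x in atTop, Eσ - ε < ∑ n ∈ Finset.range N, b n x :=
    hsumb.eventually_const_lt (by linarith)
  have e3 : ∀ᶠ x in atTop, rtail μ (x - h x) / rtail μ x * Eσ < Eσ + ε := by
    have hmul : Tendsto (fun x => rtail μ (x - h x) / rtail μ x * Eσ) atTop (nhds Eσ) := by
      simpa using hh3.mul_const Eσ
    exact hmul.eventually_lt_const (by linarith)
  filter_upwards [e1, e2, e3] with x hx1 hx2 hx3
  have hfu : (P (eventA1 ξ σ h x)).toReal / rtail μ x
      ≤ rtail μ (x - h x) / rtail μ x * Eσ := by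
    have hu := hupper x hx1
    calc (P (eventA1 ξ σ h x)).toReal / rtail μ x
        ≤ (rtail μ (x - h x) * Eσ) / rtail μ x := by gcongr; exact (hFpos x).le
      _ = rtail μ (x - h x) / rtail μ x * Eσ := by ring
  have hfl := hlower N x hx1
  rw [Real.dist_eq, abs_sub_lt_iff]
  constructor <;> linarith
end
end

section
/- Suppose there exists a stopping time σ such that P(σ > 0) > 0, P(S_σ ≤ 0) = 1 and lim_{x→∞} δ_σ(x) = 0. Then lim_{x→∞} δ_τ(x) = 0, where τ = min{n ≥ 1 : S_n ≤ 0}. -/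
open MeasureTheory ProbabilityTheory Filter Set
open scoped ENNReal ENat

noncomputable section

/-- The event `A_{σ,2}(x) = {μ(x) ≤ σ, S_{μ(x)-1} > h(x)}`, where
`μ(x) = min{n : S_n > x}` is the first passage time over level `x`. -/
def eventA2 {Ω : Type*} (ξ : ℕ → Ω → ℝ) (σ : Ω → ℕ) (h : ℝ → ℝ) (x : ℝ) : Set Ω :=
  {ω | ∃ n : ℕ, n ≤ σ ω ∧ (∀ k, k < n → walk ξ k ω ≤ x) ∧ x < walk ξ n ω ∧
    h x < walk ξ (n - 1) ω}

/-- The event `A_{τ,2}(x)` with `τ = min{n ≥ 1 : S_n ≤ 0}`:  here `μ(x)` is the first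
passage time over level `x` and the requirement `μ(x) ≤ τ` is expressed by
`S_k > 0` for all `1 ≤ k < μ(x)`. -/
def eventA2tau {Ω : Type*} (ξ : ℕ → Ω → ℝ) (h : ℝ → ℝ) (x : ℝ) : Set Ω :=
  {ω | ∃ n : ℕ, (∀ k, 1 ≤ k → k < n → 0 < walk ξ k ω) ∧
    (∀ k, k < n → walk ξ k ω ≤ x) ∧ x < walk ξ n ω ∧ h x < walk ξ (n - 1) ω}

/-- `δ(x) = sup_{y ≥ x} P(A₂(y)) / F̄(y)` (valued in `ℝ≥0∞`). -/
def deltaSup {Ω : Type*} [MeasurableSpace Ω] (P : Measure Ω) (μ : Measure ℝ)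
    (A : ℝ → Set Ω) (x : ℝ) : ℝ≥0∞ :=
  ⨆ y ∈ Set.Ici x, P (A y) / μ (Set.Ioi y)


section Aux

open MeasurableSpace

variable {Ω : Type*}

/-- If `m₁` is independent of `m₃` and `m₂` is independent of `m₁ ⊔ m₃`, then
`m₁ ⊔ m₂` is independent of `m₃`. -/
lemma aux_indep_sup {m0 : MeasurableSpace Ω} {P : Measure Ω} [IsProbabilityMeasure P]
    {m₁ m₂ m₃ : MeasurableSpace Ω} (h1 : m₁ ≤ m0) (h2 : m₂ ≤ m0) (h3 : m₃ ≤ m0)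
    (hA : Indep m₁ m₃ P) (hB : Indep m₂ (m₁ ⊔ m₃) P) :
    Indep (m₁ ⊔ m₂) m₃ P := by
  set p₁ : Set (Set Ω) :=
    {s | ∃ s₁ s₂, MeasurableSet[m₁] s₁ ∧ MeasurableSet[m₂] s₂ ∧ s = s₁ ∩ s₂} with hp₁def
  have hgen : m₁ ⊔ m₂ = MeasurableSpace.generateFrom p₁ := by
    refine le_antisymm (sup_le ?_ ?_) (MeasurableSpace.generateFrom_le ?_)
    · intro s hs
      exact measurableSet_generateFrom
        ⟨s, Set.univ, hs, MeasurableSet.univ, (Set.inter_univ s).symm⟩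
    · intro s hs
      exact measurableSet_generateFrom
        ⟨Set.univ, s, MeasurableSet.univ, hs, (Set.univ_inter s).symm⟩
    · rintro t ⟨s₁, s₂, hs₁, hs₂, rfl⟩
      exact ((le_sup_left : m₁ ≤ m₁ ⊔ m₂) _ hs₁).inter ((le_sup_right : m₂ ≤ m₁ ⊔ m₂) _ hs₂)
  have hpi1 : IsPiSystem p₁ := by
    rintro s ⟨s₁, s₂, hs₁, hs₂, rfl⟩ t ⟨t₁, t₂, ht₁, ht₂, rfl⟩ -
    refine ⟨s₁ ∩ t₁, s₂ ∩ t₂, hs₁.inter ht₁, hs₂.inter ht₂, ?_⟩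
    ext ω; simp only [Set.mem_inter_iff]; tauto
  have hpi2 : IsPiSystem {s | MeasurableSet[m₃] s} := fun s hs t ht _ => hs.inter ht
  have hgen3 : m₃ = MeasurableSpace.generateFrom {s | MeasurableSet[m₃] s} :=
    (@MeasurableSpace.generateFrom_measurableSet Ω m₃).symm
  refine IndepSets.indep (sup_le h1 h2) h3 hpi1 hpi2 hgen hgen3 ((IndepSets_iff _ _ _).2 ?_)
  rintro t1 t2 ⟨s₁, s₂, hs₁, hs₂, rfl⟩ ht2
  have hBiff := (Indep_iff _ _ _).1 hB
  have hAiff := (Indep_iff _ _ _).1 hA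
  have e1 : MeasurableSet[m₁ ⊔ m₃] s₁ := (le_sup_left : m₁ ≤ m₁ ⊔ m₃) _ hs₁
  have e2 : MeasurableSet[m₁ ⊔ m₃] (s₁ ∩ t2) :=
    e1.inter ((le_sup_right : m₃ ≤ m₁ ⊔ m₃) _ ht2)
  have key1 : P (s₁ ∩ s₂ ∩ t2) = P s₂ * (P s₁ * P t2) := by
    have : s₁ ∩ s₂ ∩ t2 = s₂ ∩ (s₁ ∩ t2) := by
      ext ω; simp only [Set.mem_inter_iff]; tauto
    rw [this, hBiff _ _ hs₂ e2, hAiff _ _ hs₁ ht2]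
  have key2 : P (s₁ ∩ s₂) = P s₂ * P s₁ := by
    rw [Set.inter_comm, hBiff _ _ hs₂ e1]
  rw [key1, key2, mul_assoc]

end Aux

/-- **Lemma 4(ii)** (Foss–Zachary).  Under NEG and LT, suppose there exists a stopping
time `σ` such that `P(σ > 0) > 0`, `P(S_σ ≤ 0) = 1` and `δ_σ(x) → 0` as `x → ∞`.
Then `δ_τ(x) → 0` as `x → ∞`, where `τ = min{n ≥ 1 : S_n ≤ 0}`. -/
theorem deltaTau_of_deltaSigma
    {Ω : Type*} [MeasurableSpace Ω] (P : Measure Ω) [IsProbabilityMeasure P]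
    (ξ : ℕ → Ω → ℝ) (μ : Measure ℝ) [IsProbabilityMeasure μ]
    (hmeas : ∀ n, Measurable (ξ n))
    (hlaw : ∀ n, P.map (ξ n) = μ)
    (hiid : iIndepFun ξ P)
    (m : ℝ) (hm : 0 < m) (hint : Integrable id μ) (hmean : (∫ x, x ∂μ) = -m)
    (hlt : LongTailed μ)
    (h : ℝ → ℝ) (hh0 : ∀ x, 0 ≤ h x) (hh1 : ∀ x, 0 ≤ x → h x ≤ x / 2)
    (hh2 : Filter.Tendsto h Filter.atTop Filter.atTop)
    (hh3 : Filter.Tendsto (fun x => rtail μ (x - h x) / rtail μ x) Filter.atTop (nhds 1))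
    (hh4 : ∃ x₀ : ℝ, ∀ x t : ℝ, x₀ ≤ x → 0 ≤ t → h (x + t) ≤ h x + t)
    (𝓕 : ℕ → MeasurableSpace Ω) (hFmono : Monotone 𝓕)
    (hFle : ∀ n, 𝓕 n ≤ ‹MeasurableSpace Ω›)
    (hFadapt : ∀ n, Measurable[𝓕 (n + 1)] (ξ n))
    (hFindep : ∀ n, Indep (MeasurableSpace.comap (ξ n) inferInstance) (𝓕 n) P)
    (σ : Ω → ℕ) (hstop : ∀ n : ℕ, MeasurableSet[𝓕 n] {ω | σ ω ≤ n})
    (hσpos : 0 < P {ω | 0 < σ ω})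
    (hσneg : P {ω | walk ξ (σ ω) ω ≤ 0} = 1)
    (hσ : Filter.Tendsto (deltaSup P μ (eventA2 ξ σ h)) Filter.atTop (nhds 0)) :
    Filter.Tendsto (deltaSup P μ (eventA2tau ξ h)) Filter.atTop (nhds 0) := by
  classical
  have hcomap_le : ∀ n, MeasurableSpace.comap (ξ n) inferInstance ≤ ‹MeasurableSpace Ω› :=
    fun n => (hmeas n).comap_le
  -- the σ-algebra generated by the first n increments
  set g : ℕ → MeasurableSpace Ω :=
    fun n => ⨆ k ∈ Finset.range n, MeasurableSpace.comap (ξ k) inferInstance with hg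
  have hgmono : Monotone g := by
    intro a b hab
    refine iSup₂_le fun k hk => ?_
    exact le_iSup₂ (f := fun k (_ : k ∈ Finset.range b) =>
      MeasurableSpace.comap (ξ k) inferInstance) k
      (Finset.mem_range.mpr (lt_of_lt_of_le (Finset.mem_range.mp hk) hab))
  have hg_le : ∀ n, g n ≤ ‹MeasurableSpace Ω› := fun n => iSup₂_le fun k _ => hcomap_le k
  have hg_le_F : ∀ n, g n ≤ 𝓕 n := by
    intro n
    refine iSup₂_le fun k hk => ?_
    exact le_trans (measurable_iff_comap_le.1 (hFadapt k)) (hFmono (Finset.mem_range.1 hk))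
  -- independence of g n from 𝓕 0, by induction
  have indep_g : ∀ n, Indep (g n) (𝓕 0) P := by
    intro n
    induction n with
    | zero =>
        have : g 0 = ⊥ := by simp [hg]
        rw [this]
        exact indep_bot_left (𝓕 0)
    | succ n ih =>
        have hsucc : g (n + 1) = g n ⊔ MeasurableSpace.comap (ξ n) inferInstance := by
          rw [hg]
          simp only [Finset.range_add_one, Finset.iSup_insert]
          exact sup_comm _ _
        rw [hsucc]
        refine aux_indep_sup (hg_le n) (hcomap_le n) (hFle 0) ih ?_
        exact indep_of_indep_of_le_right (hFindep n)
          (sup_le (hg_le_F n) (hFmono (Nat.zero_le n)))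
  -- the σ-algebra generated by all increments
  have indepM : Indep (⨆ n, g n) (𝓕 0) P :=
    indep_iSup_of_monotone indep_g hg_le (hFle 0) hgmono
  -- walks are measurable w.r.t. ⨆ n, g n
  have hξM : ∀ k, Measurable[⨆ n, g n] (ξ k) := by
    intro k
    refine measurable_iff_comap_le.2 (le_trans ?_ (le_iSup g (k + 1)))
    exact le_iSup₂ (f := fun j (_ : j ∈ Finset.range (k + 1)) =>
      MeasurableSpace.comap (ξ j) inferInstance) k (Finset.mem_range.mpr k.lt_succ_self)
  have hwalkM : ∀ n, Measurable[⨆ n, g n] (walk ξ n) := by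
    intro n
    have : walk ξ n = fun ω => ∑ i ∈ Finset.range n, ξ i ω := rfl
    rw [this]
    exact Finset.measurable_sum (Finset.range n) (fun i _ => hξM i)
  -- the event A_{τ,2}(y) is M-measurable
  have hAτ_meas : ∀ y : ℝ, MeasurableSet[⨆ n, g n] (eventA2tau ξ h y) := by
    intro y
    have hrw : eventA2tau ξ h y = ⋃ n : ℕ,
        ((⋂ k : ℕ, ⋂ _ : 1 ≤ k, ⋂ _ : k < n, {ω | 0 < walk ξ k ω}) ∩
          (⋂ k : ℕ, ⋂ _ : k < n, {ω | walk ξ k ω ≤ y}) ∩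
          {ω | y < walk ξ n ω} ∩ {ω | h y < walk ξ (n - 1) ω}) := by
      ext ω
      simp only [eventA2tau, Set.mem_setOf_eq, Set.mem_iUnion, Set.mem_inter_iff,
        Set.mem_iInter]
      tauto
    rw [hrw]
    refine MeasurableSet.iUnion fun n => ?_
    refine MeasurableSet.inter (MeasurableSet.inter (MeasurableSet.inter ?_ ?_) ?_) ?_
    · exact MeasurableSet.iInter fun k => MeasurableSet.iInter fun _ =>
        MeasurableSet.iInter fun _ => measurableSet_lt measurable_const (hwalkM k)
    · exact MeasurableSet.iInter fun k => MeasurableSet.iInter fun _ =>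
        measurableSet_le (hwalkM k) measurable_const
    · exact measurableSet_lt measurable_const (hwalkM n)
    · exact measurableSet_lt measurable_const (hwalkM (n - 1))
  -- measurability facts about σ
  have hσle : ∀ n, MeasurableSet {ω | σ ω ≤ n} := fun n => hFle n _ (hstop n)
  have hB0F : MeasurableSet[𝓕 0] {ω | σ ω = 0} := by
    have h' := hstop 0
    simpa only [Nat.le_zero] using h'
  have hB0 : MeasurableSet {ω | σ ω = 0} := hFle 0 _ hB0F
  have hσeq : ∀ n, MeasurableSet {ω | σ ω = n} := by
    intro n
    cases n with
    | zero => exact hB0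
    | succ m =>
        have : {ω | σ ω = m + 1} = {ω | σ ω ≤ m + 1} \ {ω | σ ω ≤ m} := by
          ext ω
          simp only [Set.mem_setOf_eq, Set.mem_diff]
          omega
        rw [this]
        exact (hσle (m + 1)).diff (hσle m)
  -- the a.s. event E = {S_σ ≤ 0}
  set E : Set Ω := {ω | walk ξ (σ ω) ω ≤ 0} with hEdef
  have hwalk_meas : ∀ n, Measurable (walk ξ n) := fun n => (hwalkM n).mono (iSup_le hg_le) le_rfl
  have hE_meas : MeasurableSet E := by
    have : E = ⋃ n : ℕ, ({ω | σ ω = n} ∩ {ω | walk ξ n ω ≤ 0}) := by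
      ext ω
      simp only [hEdef, Set.mem_setOf_eq, Set.mem_iUnion, Set.mem_inter_iff]
      exact ⟨fun hh => ⟨σ ω, rfl, hh⟩, fun ⟨n, hn, hh⟩ => hn ▸ hh⟩
    rw [this]
    exact MeasurableSet.iUnion fun n =>
      (hσeq n).inter (measurableSet_le (hwalk_meas n) measurable_const)
  have hEc : P Eᶜ = 0 := by
    rw [prob_compl_eq_zero_iff hE_meas]
    exact hσneg
  -- independence of A_{τ,2}(y) and {σ = 0}
  set q : ℝ≥0∞ := P {ω | σ ω = 0} with hqdef
  have hprod : ∀ y : ℝ, P (eventA2tau ξ h y ∩ {ω | σ ω = 0}) = P (eventA2tau ξ h y) * q :=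
    fun y => (Indep_iff _ _ _).1 indepM _ _ (hAτ_meas y) hB0F
  -- q < 1
  have hq_lt : q < 1 := by
    have hc : {ω | 0 < σ ω} = {ω | σ ω = 0}ᶜ := by
      ext ω
      simp [pos_iff_ne_zero]
    rw [hc, prob_compl_eq_one_sub hB0] at hσpos
    exact tsub_pos_iff_lt.1 hσpos
  have h1q_ne : (1 : ℝ≥0∞) - q ≠ 0 := by
    rw [Ne, tsub_eq_zero_iff_le]
    exact not_le.2 hq_lt
  have h1q_netop : (1 : ℝ≥0∞) - q ≠ ⊤ := by
    exact ne_top_of_le_ne_top ENNReal.one_ne_top tsub_le_self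
  -- the key pointwise bound
  have key : ∀ y : ℝ, P (eventA2tau ξ h y) ≤ P (eventA2 ξ σ h y) / (1 - q) := by
    intro y
    set A := eventA2tau ξ h y with hAdef
    set C := eventA2 ξ σ h y with hCdef
    have hsub : A ∩ E ⊆ C ∪ (A ∩ {ω | σ ω = 0}) := by
      rintro ω ⟨hA, hEω⟩
      by_cases h0 : σ ω = 0
      · exact Or.inr ⟨hA, h0⟩
      · left
        obtain ⟨n, hpos, hle, hx, hhx⟩ := hA
        refine ⟨n, ?_, hle, hx, hhx⟩
        by_contra hn
        push_neg at hn
        exact absurd hEω (not_le.2 (hpos _ (Nat.one_le_iff_ne_zero.2 h0) hn))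
    have step1 : P A ≤ P (A ∩ E) := by
      have hdiff : P (A \ E) = 0 :=
        le_antisymm (le_trans (measure_mono (Set.diff_subset_compl A E)) hEc.le) zero_le
      calc P A = P (A ∩ E) + P (A \ E) := (measure_inter_add_diff A hE_meas).symm
        _ ≤ P (A ∩ E) := le_of_eq (by rw [hdiff, add_zero])
    have step2 : P (A ∩ E) ≤ P C + P A * q := by
      calc P (A ∩ E) ≤ P (C ∪ (A ∩ {ω | σ ω = 0})) := measure_mono hsub
        _ ≤ P C + P (A ∩ {ω | σ ω = 0}) := measure_union_le _ _
        _ = P C + P A * q := by rw [hprod y]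
    have hle : P A ≤ P C + P A * q := le_trans step1 step2
    rw [ENNReal.le_div_iff_mul_le (Or.inl h1q_ne) (Or.inl h1q_netop)]
    have hmul : P A * (1 - q) = P A * 1 - P A * q :=
      ENNReal.mul_sub (fun _ _ => measure_ne_top P A)
    rw [hmul, mul_one]
    exact tsub_le_iff_right.2 hle
  -- bound on deltaSup
  have hdelta : ∀ x : ℝ, deltaSup P μ (eventA2tau ξ h) x ≤
      (1 - q)⁻¹ * deltaSup P μ (eventA2 ξ σ h) x := by
    intro x
    refine iSup₂_le fun y hy => ?_
    calc P (eventA2tau ξ h y) / μ (Set.Ioi y)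
        ≤ (P (eventA2 ξ σ h y) / (1 - q)) / μ (Set.Ioi y) :=
          ENNReal.div_le_div_right (key y) _
      _ = (1 - q)⁻¹ * (P (eventA2 ξ σ h y) / μ (Set.Ioi y)) := by
          rw [div_eq_mul_inv, div_eq_mul_inv, div_eq_mul_inv]
          ring
      _ ≤ (1 - q)⁻¹ * deltaSup P μ (eventA2 ξ σ h) x := by
          refine mul_le_mul_right ?_ _
          exact le_iSup₂ (f := fun y (_ : y ∈ Set.Ici x) =>
            P (eventA2 ξ σ h y) / μ (Set.Ioi y)) y hy
  -- conclusion by squeezing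
  have hupper : Filter.Tendsto (fun x => (1 - q)⁻¹ * deltaSup P μ (eventA2 ξ σ h) x)
      Filter.atTop (nhds 0) := by
    have := ENNReal.Tendsto.const_mul hσ (Or.inr (ENNReal.inv_ne_top.2 h1q_ne))
    simpa using this
  exact tendsto_of_tendsto_of_tendsto_of_le_of_le tendsto_const_nhds hupper
    (fun x => zero_le) hdelta
end
end
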